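/- For all natural numbers h ≤ k, the word ψ(h,k) factors as ψ(h,k) = ( ∏_{ℓ=h}^{k−1} S^{−a(ℓ,k−1)}(ψ(0,k−1))² ) · k, i.e., the concatenation over ℓ = h, h+1, …, k−1 of the square of the word obtained from ψ(0,k−1) by cyclically rotating it a(ℓ,k−1) positions to the right, followed by the single letter k. -/

import Mathlib

/-- S⁻¹: move the last letter of a nonempty word to the front. -/
def sInv (w : List ℕ) : List ℕ := w.rotate (w.length - 1)

/-- Apply a substitution `f` letterwise to a word (the morphism determined by `f`). -/
def applyM (f : ℕ → List ℕ) (w : List ℕ) : List ℕ := (w.map f).flatten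

/-- Fuel-indexed approximation of the morphism φ: `phiAux n` agrees with φ on all
letters `c < n`.  (Computing φ^c(00) only uses φ on letters smaller than `c`, so the
recursion is well-founded in the fuel.) -/
def phiAux : ℕ → ℕ → List ℕ
  | 0, _ => []
  | n + 1, c => sInv ((applyM (phiAux n))^[c] [0, 0]) ++ [c + 1]

/-- The morphism φ on letters: φ(h) = S⁻¹(φ^h(00))·(h+1).
In particular φ(0) = 001 and φ(1) = 1001002. -/
def phi (c : ℕ) : List ℕ := phiAux (c + 1) c

/-- The morphism φ on words. -/
def phiW (w : List ℕ) : List ℕ := applyM phi w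

/-- ψ(h,k) = φ^(k−h)(h). -/
def psi (h k : ℕ) : List ℕ := phiW^[k - h] [h]

/-- a(h,k) = |ψ(h,k)|. -/
def a (h k : ℕ) : ℕ := (psi h k).length

/-- S^(−m): cyclic rotation of a word to the right by `m` positions (taken modulo the
length), i.e. the last `m mod |w|` letters are moved to the front. -/
def rotR (w : List ℕ) (m : ℕ) : List ℕ := w.rotate (w.length - m % w.length)

lemma applyM_append (f : ℕ → List ℕ) (u v : List ℕ) :
    applyM f (u ++ v) = applyM f u ++ applyM f v := by simp [applyM]

lemma applyM_congr {f g : ℕ → List ℕ} {w : List ℕ} (h : ∀ x ∈ w, f x = g x) :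
    applyM f w = applyM g w :=
  congrArg List.flatten (List.map_congr_left h)

/-- Simultaneous induction: the canonical form of `phi`, letter bounds, and the fact
that `phiAux n` agrees with `phi` below the fuel `n`. -/
lemma phi_main : ∀ n, ∀ c < n,
    phi c = sInv (phiW^[c] [0,0]) ++ [c+1] ∧
    (∀ x ∈ phi c, x ≤ c + 1) ∧
    phiAux n c = phi c := by
  intro n
  induction n using Nat.strong_induction_on with
  | _ n IH =>
    match n with
    | 0 => exact fun c hc => absurd hc (by omega)
    | m + 1 =>
      have H : ∀ p ≤ m, ∀ j ≤ p, (applyM (phiAux p))^[j] [0,0] = phiW^[j] [0,0] ∧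
          (∀ x ∈ phiW^[j] [0,0], x ≤ j) := by
        intro p hp j
        induction j with
        | zero => simp
        | succ j ihj =>
          intro hj
          obtain ⟨h1, h2⟩ := ihj (by omega)
          have hlt : ∀ x ∈ phiW^[j] [0,0], x < p := fun x hx => by
            have := h2 x hx; omega
          have hagree : applyM (phiAux p) (phiW^[j] [0,0]) = phiW (phiW^[j] [0,0]) := by
            apply applyM_congr
            intro x hx
            exact (IH p (by omega) x (hlt x hx)).2.2
          constructor
          · rw [Function.iterate_succ_apply', Function.iterate_succ_apply', h1, hagree]
          · intro x hx
            rw [Function.iterate_succ_apply'] at hx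
            simp only [phiW, applyM, List.mem_flatten, List.mem_map] at hx
            obtain ⟨l, ⟨d, hd, rfl⟩, hxl⟩ := hx
            have := (IH p (by omega) d (hlt d hd)).2.1 x hxl
            have := h2 d hd
            omega
      intro c hc
      have hcm : c ≤ m := by omega
      have hform : phi c = sInv (phiW^[c] [0,0]) ++ [c+1] := by
        show phiAux (c+1) c = _
        rw [show phiAux (c+1) c = sInv ((applyM (phiAux c))^[c] [0,0]) ++ [c+1] from rfl,
          (H c hcm c le_rfl).1]
      refine ⟨hform, ?_, ?_⟩
      · intro x hx
        rw [hform] at hx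
        rcases List.mem_append.mp hx with hx | hx
        · have : x ∈ phiW^[c] [0,0] := List.mem_rotate.mp hx
          have := (H c hcm c le_rfl).2 x this
          omega
        · simp at hx; omega
      · rw [show phiAux (m+1) c = sInv ((applyM (phiAux m))^[c] [0,0]) ++ [c+1] from rfl,
          (H m le_rfl c hcm).1, hform]

/-- The canonical form of φ on letters: φ(c) = S⁻¹(φ^c(00))·(c+1) with the genuine φ. -/
lemma phi_def (c : ℕ) : phi c = sInv (phiW^[c] [0,0]) ++ [c+1] :=
  (phi_main (c+1) c (Nat.lt_succ_self c)).1

lemma phiW_append (u v : List ℕ) : phiW (u ++ v) = phiW u ++ phiW v :=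
  applyM_append _ u v

lemma phiW_iter_append (j : ℕ) (u v : List ℕ) :
    phiW^[j] (u ++ v) = phiW^[j] u ++ phiW^[j] v := by
  induction j generalizing u v with
  | zero => rfl
  | succ j ih =>
    rw [Function.iterate_succ_apply, Function.iterate_succ_apply, Function.iterate_succ_apply,
      phiW_append, ih]

lemma sInv_concat (w : List ℕ) (c : ℕ) : sInv (w ++ [c]) = c :: w := by
  have h : w.length ≤ (w ++ [c]).length := by simp
  simp [sInv, List.rotate_eq_drop_append_take h]

lemma phiW_single (c : ℕ) : phiW [c] = phi c := by simp [phiW, applyM]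

/-- φ^j(h) ends with the letter h+j. -/
lemma iter_last : ∀ j h : ℕ, ∃ u, phiW^[j] [h] = u ++ [h + j] := by
  intro j
  induction j with
  | zero => exact fun h => ⟨[], by simp⟩
  | succ j ih =>
    intro h
    rw [Function.iterate_succ_apply, phiW_single, phi_def h]
    obtain ⟨u, hu⟩ := ih (h + 1)
    refine ⟨phiW^[j] (sInv (phiW^[h] [0,0])) ++ u, ?_⟩
    rw [phiW_iter_append, hu]
    simp [List.append_assoc]
    omega

lemma rotR_key (A B : List ℕ) : rotR (B ++ A) A.length = A ++ B := by
  rcases B with _ | ⟨b, B⟩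
  · simp [rotR, Nat.mod_self, List.rotate_length]
  · have hlen : A.length % (b :: B ++ A).length = A.length := by
      apply Nat.mod_eq_of_lt; simp
    have h2 : (b :: B ++ A).length - A.length = (b :: B).length := by simp; omega
    have h3 : (b :: B).length ≤ (b :: B ++ A).length := by simp
    rw [rotR, hlen, h2, List.rotate_eq_drop_append_take h3]
    simp

lemma main_aux : ∀ d h : ℕ, psi h (h + d) =
    ((List.range d).map fun i =>
      rotR (psi 0 (h + d - 1)) (a (h + i) (h + d - 1)) ++
      rotR (psi 0 (h + d - 1)) (a (h + i) (h + d - 1))).flatten ++ [h + d] := by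
  intro d
  induction d with
  | zero => intro h; simp [psi]
  | succ d ih =>
    intro h
    obtain ⟨u, hu⟩ : ∃ u, phiW^[h] [0] = u ++ [h] := by
      obtain ⟨u, hu⟩ := iter_last h 0
      exact ⟨u, by simpa using hu⟩
    set A : List ℕ := phiW^[d] [h] with hA
    set B : List ℕ := phiW^[d] u with hB
    have hphi : phi h = [h] ++ (u ++ ([h] ++ (u ++ [h + 1]))) := by
      rw [phi_def h,
        show ([0,0] : List ℕ) = [0] ++ [0] from rfl, phiW_iter_append, hu, List.append_assoc,
        ← List.append_assoc, ← List.append_assoc, sInv_concat]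
      simp
    have hdec : psi h (h + (d+1)) = A ++ (B ++ (A ++ (B ++ psi (h+1) (h + (d+1))))) := by
      show phiW^[h + (d+1) - h] [h] = _
      rw [show h + (d+1) - h = d + 1 by omega, Function.iterate_succ_apply, phiW_single, hphi]
      rw [phiW_iter_append, phiW_iter_append, phiW_iter_append, phiW_iter_append]
      rw [show psi (h+1) (h + (d+1)) = phiW^[d] [h+1] by
        show phiW^[h + (d+1) - (h+1)] [h+1] = _; rw [show h + (d+1) - (h+1) = d by omega]]
    have hBA : psi 0 (h + d) = B ++ A := by
      show phiW^[h + d - 0] [0] = _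
      rw [show h + d - 0 = d + h by omega, Function.iterate_add_apply, hu, phiW_iter_append]
    have haA : a h (h + d) = A.length := by
      rw [a, show psi h (h+d) = A by
        show phiW^[h + d - h] [h] = _; rw [show h + d - h = d by omega]]
    have hih := ih (h+1)
    rw [show h + 1 + d - 1 = h + d by omega, show h + 1 + d = h + (d + 1) by omega] at hih
    rw [hdec, hih]
    rw [List.range_succ_eq_map]
    simp only [List.map_cons, List.map_map, List.flatten_cons]
    rw [show h + (d + 1) - 1 = h + d by omega]
    rw [show h + 0 = h from rfl, haA, hBA, rotR_key A B]
    have hmap : (List.range d).map ((fun i =>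
        rotR (B ++ A) (a (h + i) (h + d)) ++ rotR (B ++ A) (a (h + i) (h + d))) ∘ Nat.succ)
        = (List.range d).map (fun i =>
        rotR (B ++ A) (a (h + 1 + i) (h + d)) ++ rotR (B ++ A) (a (h + 1 + i) (h + d))) := by
      apply List.map_congr_left
      intro i _
      have hi : h + Nat.succ i = h + 1 + i := by omega
      simp only [Function.comp_apply, hi]
    rw [hmap]
    simp [List.append_assoc]

/-- For h ≤ k, ψ(h,k) is the concatenation, over ℓ = h, …, k−1, of the squares of the
rotations S^(−a(ℓ,k−1))(ψ(0,k−1)), followed by the single letter k. -/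
theorem psi_factorization (h k : ℕ) (hhk : h ≤ k) :
    psi h k =
      ((List.range (k - h)).map fun i =>
        rotR (psi 0 (k - 1)) (a (h + i) (k - 1)) ++
        rotR (psi 0 (k - 1)) (a (h + i) (k - 1))).flatten ++ [k] := by
  obtain ⟨d, rfl⟩ : ∃ d, k = h + d := ⟨k - h, by omega⟩
  rw [show h + d - h = d by omega]
  exact main_aux d h
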